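/- Let V be a finite set, G a simple graph on V, d ∈ ℕ, and Π_d the partition of V into connected components of the graph G_d whose edges are pairs {u,v} with |N_u ∩ N_v| > 2d. For a component C ∈ Π_d, let U^d_C = {v ∈ V : |N_w △ N_u| ≤ 2d for all w in the component of v in Π_d and all u ∈ C}. Then for any partition Π of V with φ(Π) ≤ d and any v ∈ V, we have [v]_{Π_d} ⊆ [v]_Π ⊆ U^d_{[v]_{Π_d}}. -/
import Mathlib


open scoped symmDiff

open Finset

variable {V : Type*} [Fintype V] [DecidableEq V]

/-- Closed neighborhood of `v`: `v` together with its adjacent vertices. -/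
def nbhd (G : SimpleGraph V) [DecidableRel G.Adj] (v : V) : Finset V :=
  insert v (G.neighborFinset v)

/-- `P` encodes a partition of `V`, where `P v` is the block containing `v`. -/
def IsPartitionFun (P : V → Finset V) : Prop :=
  (∀ v, v ∈ P v) ∧ ∀ u v : V, u ∈ P v → P u = P v

/-- Maximum disagreement of the partition `P`. -/
def phi (G : SimpleGraph V) [DecidableRel G.Adj] (P : V → Finset V) : ℕ :=
  Finset.univ.sup fun v => ((P v) ∆ (nbhd G v)).card

/-- Auxiliary graph `G_d`: edges are pairs whose closed neighborhoods intersect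
in more than `2 * d` vertices. -/
def Gd (G : SimpleGraph V) [DecidableRel G.Adj] (d : ℕ) : SimpleGraph V :=
  SimpleGraph.fromRel fun u v => 2 * d < (nbhd G u ∩ nbhd G v).card

/-- The block of `v` in the partition of `V` into connected components of `G_d`. -/
def compBlock (G : SimpleGraph V) [DecidableRel G.Adj] (d : ℕ)
    [DecidableRel (Gd G d).Reachable] (v : V) : Finset V :=
  Finset.univ.filter fun u => (Gd G d).Reachable u v

/-- The set `U^d_C` for the component `C` of `v`. -/
def Ud (G : SimpleGraph V) [DecidableRel G.Adj] (d : ℕ)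
    [DecidableRel (Gd G d).Reachable] (v : V) : Finset V :=
  Finset.univ.filter fun x =>
    ∀ w ∈ compBlock G d x, ∀ u ∈ compBlock G d v, ((nbhd G w) ∆ (nbhd G u)).card ≤ 2 * d

theorem statement10 (G : SimpleGraph V) [DecidableRel G.Adj] (d : ℕ)
    [DecidableRel (Gd G d).Reachable]
    (P : V → Finset V) (hP : IsPartitionFun P) (hphi : phi G P ≤ d) (v : V) :
    compBlock G d v ⊆ P v ∧ P v ⊆ Ud G d v := by
  obtain ⟨hmem, hblk⟩ := hP
  have hbound : ∀ w : V, ((P w) ∆ (nbhd G w)).card ≤ d := fun w =>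
    le_trans (Finset.le_sup (f := fun v => ((P v) ∆ (nbhd G v)).card) (Finset.mem_univ w)) hphi
  -- adjacent in Gd implies same block
  have step : ∀ u w : V, (Gd G d).Adj u w → P u = P w := by
    intro u w huw
    have hcard : 2 * d < (nbhd G u ∩ nbhd G w).card := by
      rcases huw.2 with h | h
      · exact h
      · rwa [Finset.inter_comm]
    by_contra hne
    have hdisj : Disjoint (P u) (P w) := by
      rw [Finset.disjoint_left]
      intro x hxu hxw
      exact hne ((hblk x u hxu).symm.trans (hblk x w hxw))
    have hsub : nbhd G u ∩ nbhd G w ⊆ ((P u) ∆ (nbhd G u)) ∪ ((P w) ∆ (nbhd G w)) := by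
      intro x hx
      rw [Finset.mem_inter] at hx
      by_cases hxu : x ∈ P u
      · have hxw : x ∉ P w := Finset.disjoint_left.mp hdisj hxu
        exact Finset.mem_union_right _ (Finset.mem_symmDiff.mpr (Or.inr ⟨hx.2, hxw⟩))
      · exact Finset.mem_union_left _ (Finset.mem_symmDiff.mpr (Or.inr ⟨hx.1, hxu⟩))
    have := Finset.card_le_card hsub
    have h2 := Finset.card_union_le ((P u) ∆ (nbhd G u)) ((P w) ∆ (nbhd G w))
    have b1 := hbound u
    have b2 := hbound w
    omega
  have reach : ∀ u w : V, (Gd G d).Reachable u w → P u = P w := by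
    intro u w h
    obtain ⟨p⟩ := h
    induction p with
    | nil => rfl
    | cons h _ ih => exact (step _ _ h).trans ih
  have hcomp : ∀ x : V, compBlock G d x ⊆ P x := by
    intro x u hu
    rw [compBlock, Finset.mem_filter] at hu
    rw [← reach u x hu.2]
    exact hmem u
  refine ⟨hcomp v, ?_⟩
  intro x hx
  rw [Ud, Finset.mem_filter]
  refine ⟨Finset.mem_univ x, ?_⟩
  intro w hw u hu
  have hwP : w ∈ P v := by
    have := hcomp x hw
    rwa [hblk x v hx] at this
  have huP : u ∈ P v := hcomp v hu
  have hsub : (nbhd G w) ∆ (nbhd G u) ⊆ ((P w) ∆ (nbhd G w)) ∪ ((P u) ∆ (nbhd G u)) := by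
    have hPw : P w = P v := hblk w v hwP
    have hPu : P u = P v := hblk u v huP
    intro y hy
    rw [Finset.mem_symmDiff] at hy
    rcases hy with ⟨h1, h2⟩ | ⟨h1, h2⟩
    · by_cases hyP : y ∈ P v
      · exact Finset.mem_union_right _ (Finset.mem_symmDiff.mpr (Or.inl ⟨hPu ▸ hyP, h2⟩))
      · exact Finset.mem_union_left _ (Finset.mem_symmDiff.mpr (Or.inr ⟨h1, fun c => hyP (hPw ▸ c)⟩))
    · by_cases hyP : y ∈ P v
      · exact Finset.mem_union_left _ (Finset.mem_symmDiff.mpr (Or.inl ⟨hPw ▸ hyP, h2⟩))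
      · exact Finset.mem_union_right _ (Finset.mem_symmDiff.mpr (Or.inr ⟨h1, fun c => hyP (hPu ▸ c)⟩))
  calc ((nbhd G w) ∆ (nbhd G u)).card
      ≤ (((P w) ∆ (nbhd G w)) ∪ ((P u) ∆ (nbhd G u))).card := Finset.card_le_card hsub
    _ ≤ ((P w) ∆ (nbhd G w)).card + ((P u) ∆ (nbhd G u)).card := Finset.card_union_le _ _
    _ ≤ d + d := Nat.add_le_add (hbound w) (hbound u)
    _ = 2 * d := by ring
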